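/- Let Ω ⊂ ℝⁿ be a convex domain containing no real line, and let w, z ∈ Ω ⊂ T_Ω ∩ ℝⁿ be distinct. If g : 𝔻 → T_Ω is a complex geodesic with g(0) = w and g(s) = z for some s ∈ (0,1), then the map f(λ) := (g(λ) + conj(g(conj λ)))/2 is a complex geodesic of T_Ω with f(0) = w, f(s) = z, and f((−1,1)) ⊂ ℝⁿ. -/

import Mathlib

open Set Metric Complex

def Tube {n : ℕ} (Ω : Set (Fin n → ℝ)) : Set (Fin n → ℂ) :=
  {z | (fun i => (z i).re) ∈ Ω}

def IsComplexGeodesic {n : ℕ} (D : Set (Fin n → ℂ)) (f : ℂ → Fin n → ℂ) : Prop :=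
  DifferentiableOn ℂ f (ball 0 1) ∧ MapsTo f (ball 0 1) D ∧
    ∃ F : (Fin n → ℂ) → ℂ, DifferentiableOn ℂ F D ∧ MapsTo F D (ball 0 1) ∧
      ∀ l ∈ ball (0:ℂ) 1, F (f l) = l

lemma conj_comp_diffAt {E : Type*} [NormedAddCommGroup E] [NormedSpace ℂ E]
    [FiniteDimensional ℂ E]
    (cE : E ≃L[ℝ] E) (hcE : ∀ (c : ℂ) (v : E), cE (c • v) = (starRingEnd ℂ) c • cE v)
    {F : E → ℂ} {y : E} (hF : DifferentiableAt ℂ F (cE y)) :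
    DifferentiableAt ℂ (fun z => (starRingEnd ℂ) (F (cE z))) y := by
  set L := fderiv ℂ F (cE y) with hL
  have hlin : IsLinearMap ℂ (fun v : E => (starRingEnd ℂ) (L (cE v))) := by
    constructor
    · intro a b; simp [map_add]
    · intro a v
      simp only [hcE, map_smul, smul_eq_mul, map_mul, Complex.conj_conj, RingHom.id_apply]
  set L' : E →L[ℂ] ℂ := LinearMap.toContinuousLinearMap (hlin.mk' _) with hL'
  have h1 : HasFDerivAt (⇑cE) (cE : E →L[ℝ] E) y := cE.toContinuousLinearMap.hasFDerivAt
  have h2 : HasFDerivAt F (L.restrictScalars ℝ) (cE y) :=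
    (hF.hasFDerivAt).restrictScalars ℝ
  have h3 : HasFDerivAt (⇑(starRingEnd ℂ))
      (Complex.conjCLE : ℂ ≃L[ℝ] ℂ).toContinuousLinearMap (F (cE y)) :=
    Complex.conjCLE.toContinuousLinearMap.hasFDerivAt
  have h4 := h3.comp y (h2.comp y h1)
  have hEq : L'.restrictScalars ℝ =
      ((Complex.conjCLE : ℂ ≃L[ℝ] ℂ).toContinuousLinearMap).comp
        ((L.restrictScalars ℝ).comp (cE : E →L[ℝ] E)) := by
    ext v
    simp [hL', IsLinearMap.mk'_apply]
  exact (hasFDerivAt_of_restrictScalars ℝ h4 hEq).differentiableAt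

lemma half_mem_ball (a b : ℂ) (ha : a ∈ ball (0:ℂ) 1) (hb : b ∈ ball (0:ℂ) 1) :
    (a + (starRingEnd ℂ) b) / 2 ∈ ball (0:ℂ) 1 := by
  rw [mem_ball_zero_iff] at *
  have hcb : ‖(starRingEnd ℂ) b‖ = ‖b‖ := norm_star b
  calc ‖(a + (starRingEnd ℂ) b)/2‖ = ‖a + (starRingEnd ℂ) b‖/2 := by
        rw [norm_div]; norm_num
    _ ≤ (‖a‖ + ‖(starRingEnd ℂ) b‖)/2 := by gcongr; exact norm_add_le _ _
    _ < 1 := by rw [hcb]; linarith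

theorem stmt_9 {n : ℕ} (Ω : Set (Fin n → ℝ)) (hΩopen : IsOpen Ω)
    (hΩconv : Convex ℝ Ω)
    (hnoline : ¬ ∃ p v : Fin n → ℝ, v ≠ 0 ∧ ∀ t : ℝ, p + t • v ∈ Ω)
    (w z : Fin n → ℝ) (hw : w ∈ Ω) (hz : z ∈ Ω) (hwz : w ≠ z)
    (g : ℂ → Fin n → ℂ) (hg : IsComplexGeodesic (Tube Ω) g)
    (s : ℝ) (hs : s ∈ Set.Ioo (0:ℝ) 1)
    (hg0 : g 0 = fun i => (w i : ℂ)) (hgs : g (s : ℂ) = fun i => (z i : ℂ)) :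
    IsComplexGeodesic (Tube Ω)
        (fun l => fun i => (g l i + (starRingEnd ℂ) (g ((starRingEnd ℂ) l) i)) / 2) ∧
      ((fun i => (g (0:ℂ) i + (starRingEnd ℂ) (g ((starRingEnd ℂ) (0:ℂ)) i)) / 2)
          = fun i => (w i : ℂ)) ∧
      ((fun i => (g (s:ℂ) i + (starRingEnd ℂ) (g ((starRingEnd ℂ) (s:ℂ)) i)) / 2)
          = fun i => (z i : ℂ)) ∧
      (∀ t ∈ Set.Ioo (-1:ℝ) 1, ∀ i,
        ((g (t:ℂ) i + (starRingEnd ℂ) (g ((starRingEnd ℂ) (t:ℂ)) i)) / 2).im = 0) := by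
  obtain ⟨hgd, hgm, F, hFd, hFm, hFinv⟩ := hg
  set Cn : (Fin n → ℂ) ≃L[ℝ] (Fin n → ℂ) :=
    ContinuousLinearEquiv.piCongrRight fun _ : Fin n => Complex.conjCLE with hCndef
  have hCnsmul : ∀ (a : ℂ) (v : Fin n → ℂ), Cn (a • v) = (starRingEnd ℂ) a • Cn v := by
    intro a v; funext i
    show (starRingEnd ℂ) (a * v i) = (starRingEnd ℂ) a * (starRingEnd ℂ) (v i)
    exact map_mul _ _ _
  have hconjsmul : ∀ (a v : ℂ), Complex.conjCLE (a • v) = (starRingEnd ℂ) a • Complex.conjCLE v := by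
    intro a v; simp [smul_eq_mul, map_mul]
  have hball : ∀ {l : ℂ}, l ∈ ball (0:ℂ) 1 → (starRingEnd ℂ) l ∈ ball (0:ℂ) 1 := by
    intro l hl; simpa [mem_ball_zero_iff] using hl
  have hTubeConj : ∀ {v : Fin n → ℂ}, v ∈ Tube Ω → Cn v ∈ Tube Ω := by
    intro v hv
    show (fun i => (Cn v i).re) ∈ Ω
    have : (fun i => (Cn v i).re) = fun i => (v i).re := by
      funext i; exact Complex.conj_re _
    rw [this]; exact hv
  have hTubeOpen : IsOpen (Tube Ω) := by
    have : Tube Ω = (fun v : Fin n → ℂ => fun i => (v i).re) ⁻¹' Ω := rfl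
    rw [this]
    exact hΩopen.preimage (continuous_pi fun i => Complex.continuous_re.comp (continuous_apply i))
  set f : ℂ → Fin n → ℂ :=
    fun l => fun i => (g l i + (starRingEnd ℂ) (g ((starRingEnd ℂ) l) i)) / 2 with hfdef
  set H : (Fin n → ℂ) → ℂ := fun v => (F v + (starRingEnd ℂ) (F (Cn v))) / 2 with hHdef
  -- differentiability of f
  have hfd : DifferentiableOn ℂ f (ball 0 1) := by
    intro x hx
    apply DifferentiableAt.differentiableWithinAt
    have hgx : DifferentiableAt ℂ g x := hgd.differentiableAt (isOpen_ball.mem_nhds hx)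
    have hgcx : DifferentiableAt ℂ g ((starRingEnd ℂ) x) :=
      hgd.differentiableAt (isOpen_ball.mem_nhds (hball hx))
    rw [hfdef, differentiableAt_pi]
    intro i
    have t1 : DifferentiableAt ℂ (fun l => g l i) x := (differentiableAt_pi.mp hgx) i
    have t2 : DifferentiableAt ℂ (fun l => (starRingEnd ℂ) (g ((starRingEnd ℂ) l) i)) x := by
      have hF' : DifferentiableAt ℂ (fun m => g m i) (Complex.conjCLE x) := by
        simpa [Complex.conjCLE_apply] using (differentiableAt_pi.mp hgcx) i
      have := conj_comp_diffAt (E := ℂ) Complex.conjCLE hconjsmul hF'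
      simpa [Complex.conjCLE_apply] using this
    exact (t1.add t2).div_const 2
  -- f maps ball into the tube
  have hfm : MapsTo f (ball 0 1) (Tube Ω) := by
    intro l hl
    have ha : (fun i => (g l i).re) ∈ Ω := hgm hl
    have hb : (fun i => (g ((starRingEnd ℂ) l) i).re) ∈ Ω := hgm (hball hl)
    show (fun i => (f l i).re) ∈ Ω
    have key : (fun i => (f l i).re)
        = (1/2 : ℝ) • (fun i => (g l i).re)
          + (1/2 : ℝ) • (fun i => (g ((starRingEnd ℂ) l) i).re) := by
      funext i
      show ((g l i + (starRingEnd ℂ) (g ((starRingEnd ℂ) l) i)) / 2).re = _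
      simp [Complex.div_re]
      try ring
    rw [key]
    exact hΩconv ha hb (by norm_num) (by norm_num) (by norm_num)
  -- differentiability of H
  have hHd : DifferentiableOn ℂ H (Tube Ω) := by
    intro x hx
    apply DifferentiableAt.differentiableWithinAt
    have h1 : DifferentiableAt ℂ F x := hFd.differentiableAt (hTubeOpen.mem_nhds hx)
    have h2 : DifferentiableAt ℂ (fun v => (starRingEnd ℂ) (F (Cn v))) x := by
      have hF' : DifferentiableAt ℂ F (Cn x) :=
        hFd.differentiableAt (hTubeOpen.mem_nhds (hTubeConj hx))
      exact conj_comp_diffAt Cn hCnsmul hF'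
    rw [hHdef]
    simp only [div_eq_mul_inv]
    exact (h1.add h2).mul_const _
  -- H maps tube into ball
  have hHm : MapsTo H (Tube Ω) (ball 0 1) := by
    intro v hv
    exact half_mem_ball _ _ (hFm hv) (hFm (hTubeConj hv))
  -- conclusions 2 and 3
  have hf0 : (fun i => (g (0:ℂ) i + (starRingEnd ℂ) (g ((starRingEnd ℂ) (0:ℂ)) i)) / 2)
      = fun i => (w i : ℂ) := by
    funext i
    rw [map_zero, hg0]
    rw [Complex.conj_ofReal, add_self_div_two]
  have hfs : (fun i => (g (s:ℂ) i + (starRingEnd ℂ) (g ((starRingEnd ℂ) (s:ℂ)) i)) / 2)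
      = fun i => (z i : ℂ) := by
    funext i
    rw [Complex.conj_ofReal, hgs]
    rw [Complex.conj_ofReal, add_self_div_two]
  have hf0' : f 0 = g 0 := by rw [hg0]; exact hf0
  have hfs' : f (s:ℂ) = g (s:ℂ) := by rw [hgs]; exact hfs
  have hball_s : (s:ℂ) ∈ ball (0:ℂ) 1 := by
    simp [mem_ball_zero_iff, abs_of_pos hs.1, hs.2]
  have hFf0 : F (f 0) = 0 := by rw [hf0']; exact hFinv 0 (mem_ball_self one_pos)
  have hFfs : F (f (s:ℂ)) = (s:ℂ) := by rw [hfs']; exact hFinv _ hball_s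
  have hCnf0 : Cn (f 0) = f 0 := by
    rw [hf0', hg0]; funext i
    show (starRingEnd ℂ) ((w i : ℂ)) = (w i : ℂ)
    exact Complex.conj_ofReal _
  have hCnfs : Cn (f (s:ℂ)) = f (s:ℂ) := by
    rw [hfs', hgs]; funext i
    show (starRingEnd ℂ) ((z i : ℂ)) = (z i : ℂ)
    exact Complex.conj_ofReal _
  have hh0 : H (f 0) = 0 := by
    rw [hHdef]; simp only [hCnf0, hFf0, map_zero, add_zero, zero_div]
  have hhs : H (f (s:ℂ)) = (s:ℂ) := by
    rw [hHdef]; simp only [hCnfs, hFfs, Complex.conj_ofReal, add_self_div_two]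
  -- Schwarz lemma for H ∘ f
  have hcomp_d : DifferentiableOn ℂ (H ∘ f) (ball 0 1) := hHd.comp hfd hfm
  have hcomp_m : MapsTo (H ∘ f) (ball 0 1) (ball ((H ∘ f) 0) 1) := by
    have h0 : (H ∘ f) 0 = 0 := hh0
    rw [h0]
    exact hHm.comp hfm
  have hsne : (s:ℂ) ≠ 0 := Complex.ofReal_ne_zero.mpr hs.1.ne'
  have hds : dslope (H ∘ f) 0 (s:ℂ) = 1 := by
    rw [dslope_of_ne _ hsne, slope_def_field]
    show ((H ∘ f) (s:ℂ) - (H ∘ f) 0) / ((s:ℂ) - 0) = 1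
    have h0 : (H ∘ f) 0 = 0 := hh0
    have h1 : (H ∘ f) (s:ℂ) = (s:ℂ) := hhs
    rw [h0, h1, sub_zero, div_self hsne]
  have key := Complex.affine_of_mapsTo_ball_of_exists_norm_dslope_eq_div
    hcomp_d (hcomp_m.mono_right ball_subset_closedBall) hball_s (by rw [hds]; norm_num)
  have hinv : ∀ l ∈ ball (0:ℂ) 1, H (f l) = l := by
    intro l hl
    have := key hl
    simpa [Function.comp, hh0, hds] using this
  refine ⟨⟨hfd, hfm, H, hHd, hHm, hinv⟩, hf0, hfs, ?_⟩
  intro t ht i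
  rw [Complex.conj_ofReal, Complex.add_conj]
  simp
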